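/- Let Ω ⊂ ℝ² be a measurable set, (fₙ) a sequence in L²(Ω), and (pⁿ) a sequence of measurable functions on Ω with values in [0,1]. Suppose pⁿ → p* almost everywhere on Ω with ∫_Ω p* > 0, and there exists A > 0 such that ∫_Ω fₙ² pⁿ ≤ A for all n. Then there exists ρ ∈ L²(Ω) with ρ ≥ 0, ∫_Ω ρ = 1, and a constant B > 0 such that |∫_Ω fₙ ρ| ≤ B for all n. -/

import Mathlib

open MeasureTheory Filter

/-- Lemma on bounded weighted means: Let `Ω ⊆ ℝ²` be measurable, `(fₙ)` a
sequence in `L²(Ω)`, `(pⁿ)` measurable with values in `[0,1]`, `pⁿ → p*` a.e. on `Ω`,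
`∫_Ω p* > 0`, and `∫_Ω fₙ² pⁿ ≤ A` for all `n`. Then there is `ρ ∈ L²(Ω)` with `ρ ≥ 0`,
`∫_Ω ρ = 1`, and `B > 0` with `|∫_Ω fₙ ρ| ≤ B` for all `n`. -/
theorem stmt_0 (Ω : Set (EuclideanSpace ℝ (Fin 2))) (hΩ : MeasurableSet Ω)
    (f : ℕ → EuclideanSpace ℝ (Fin 2) → ℝ)
    (hf : ∀ n, MemLp (f n) 2 (volume.restrict Ω))
    (p : ℕ → EuclideanSpace ℝ (Fin 2) → ℝ)
    (hpmeas : ∀ n, Measurable (p n))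
    (hprange : ∀ n x, p n x ∈ Set.Icc (0 : ℝ) 1)
    (pstar : EuclideanSpace ℝ (Fin 2) → ℝ)
    (hconv : ∀ᵐ x ∂(volume.restrict Ω),
      Tendsto (fun n => p n x) atTop (nhds (pstar x)))
    (hpos : 0 < ∫ x in Ω, pstar x)
    (A : ℝ) (hA : 0 < A)
    (hbound : ∀ n, ∫ x in Ω, (f n x) ^ 2 * p n x ≤ A) :
    ∃ ρ : EuclideanSpace ℝ (Fin 2) → ℝ,
      MemLp ρ 2 (volume.restrict Ω) ∧ (∀ x, 0 ≤ ρ x) ∧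
      (∫ x in Ω, ρ x) = 1 ∧
      ∃ B : ℝ, 0 < B ∧ ∀ n, |∫ x in Ω, f n x * ρ x| ≤ B := by
  set μ := volume.restrict Ω with hμdef
  -- pstar is a.e. measurable; replace with measurable version g
  have hpae : AEMeasurable pstar μ :=
    aemeasurable_of_tendsto_metrizable_ae _ (fun n => (hpmeas n).aemeasurable) hconv
  set g := hpae.mk pstar with hgdef
  have hgmeas : Measurable g := hpae.measurable_mk
  have hgae : pstar =ᵐ[μ] g := hpae.ae_eq_mk
  have hconv' : ∀ᵐ x ∂μ, Tendsto (fun n => p n x) atTop (nhds (g x)) := by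
    filter_upwards [hconv, hgae] with x hx he
    rwa [he] at hx
  have hgnn : ∀ᵐ x ∂μ, 0 ≤ g x := by
    filter_upwards [hconv'] with x hx
    exact ge_of_tendsto hx (Eventually.of_forall fun n => (hprange n x).1)
  have hint : Integrable pstar μ := by
    by_contra h
    rw [MeasureTheory.integral_undef h] at hpos
    exact lt_irrefl 0 hpos
  have hgint : Integrable g μ := hint.congr hgae
  have hposg : 0 < ∫ x, g x ∂μ := by
    rwa [← integral_congr_ae hgae]
  have hsupp : 0 < μ (Function.support g) :=
    (integral_pos_iff_support_of_nonneg_ae hgnn hgint).mp hposg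
  have hneg : μ {x | g x < 0} = 0 := by
    have := ae_iff.mp hgnn
    simpa [not_le] using this
  have hposset : ¬ μ {x | 0 < g x} = 0 := by
    intro h0
    have hsub : Function.support g ⊆ {x | 0 < g x} ∪ {x | g x < 0} := by
      intro x hx
      rcases lt_or_gt_of_ne hx with h | h
      · exact Or.inr h
      · exact Or.inl h
    have : μ (Function.support g) = 0 :=
      measure_mono_null hsub (measure_union_null h0 hneg)
    exact hsupp.ne' this
  have hU : {x | 0 < g x} ⊆ ⋃ n : ℕ, {x | ((n : ℝ) + 1)⁻¹ ≤ g x} := by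
    intro x hx
    have hx' : (0 : ℝ) < g x := hx
    obtain ⟨n, hn⟩ := exists_nat_one_div_lt hx'
    exact Set.mem_iUnion.2 ⟨n, le_of_lt (by simpa [one_div] using hn)⟩
  obtain ⟨k, hk⟩ := exists_measure_pos_of_not_measure_iUnion_null
    (fun h => hposset (measure_mono_null hU h))
  set δ : ℝ := ((k : ℝ) + 1)⁻¹ with hδdef
  have hδpos : 0 < δ := by positivity
  set T := {x | δ ≤ g x} with hTdef
  have hTmeas : MeasurableSet T := measurableSet_le measurable_const hgmeas
  have hTfin : μ T < ⊤ := hgint.measure_ge_lt_top hδpos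
  have hTpos : 0 < μ T := hk
  -- Egorov
  have hεpos : 0 < (μ T).toReal / 2 :=
    half_pos (ENNReal.toReal_pos hTpos.ne' hTfin.ne)
  obtain ⟨t, hts, htm, htμ, hunif⟩ :=
    tendstoUniformlyOn_of_ae_tendsto (fun n => (hpmeas n).stronglyMeasurable)
      hgmeas.stronglyMeasurable hTmeas hTfin.ne
      (hconv'.mono fun x hx _ => hx) hεpos
  set S := T \ t with hSdef
  have hSmeas : MeasurableSet S := hTmeas.diff htm
  have hSfin : μ S < ⊤ := lt_of_le_of_lt (measure_mono Set.diff_subset) hTfin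
  have htμ' : μ t ≤ μ T / 2 := by
    refine htμ.trans ?_
    rw [ENNReal.ofReal_div_of_pos (by norm_num), ENNReal.ofReal_toReal hTfin.ne]
    simp
  have hSpos : 0 < μ S := by
    by_contra h
    push_neg at h
    have hS0 : μ S = 0 := le_antisymm (by simpa using h) zero_le
    have h1 : μ T ≤ μ t + μ S := by
      refine (measure_mono ?_).trans (measure_union_le t S)
      intro x hx
      by_cases hxt : x ∈ t
      · exact Or.inl hxt
      · exact Or.inr ⟨hx, hxt⟩
    rw [hS0, add_zero] at h1
    have h2 : μ T ≤ μ T / 2 := h1.trans htμ'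
    have h3 : μ T / 2 < μ T := ENNReal.half_lt_self hTpos.ne' hTfin.ne
    exact absurd (h2.trans_lt h3) (lt_irrefl _)
  set m : ℝ := (μ S).toReal with hmdef
  have hmpos : 0 < m := ENNReal.toReal_pos hSpos.ne' hSfin.ne
  -- uniform lower bound for p n on S for large n
  have hkey : ∃ N : ℕ, ∀ n ≥ N, ∀ x ∈ S, δ / 2 ≤ p n x := by
    rw [Metric.tendstoUniformlyOn_iff] at hunif
    have := hunif (δ / 2) (half_pos hδpos)
    rw [eventually_atTop] at this
    obtain ⟨N, hN⟩ := this
    refine ⟨N, fun n hn x hx => ?_⟩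
    have hd := hN n hn x hx
    rw [Real.dist_eq] at hd
    have hgx : δ ≤ g x := hx.1
    have := abs_lt.mp hd
    linarith [this.1, this.2]
  obtain ⟨N, hN⟩ := hkey
  -- integrabilities
  have hfsq : ∀ n, Integrable (fun x => f n x ^ 2) μ := fun n => (hf n).integrable_sq
  have hfsqp : ∀ n, Integrable (fun x => f n x ^ 2 * p n x) μ := by
    intro n
    have h1 : Integrable (fun x => p n x * f n x ^ 2) μ := by
      refine (hfsq n).bdd_mul (c := 1) ((hpmeas n).aestronglyMeasurable) (ae_of_all _ fun x => ?_)
      rw [Real.norm_eq_abs, abs_of_nonneg (hprange n x).1]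
      exact (hprange n x).2
    exact h1.congr (ae_of_all _ fun x => mul_comm _ _)
  -- bound on ∫_S f n ^ 2 for n ≥ N
  have hSbound1 : ∀ n ≥ N, ∫ x in S, f n x ^ 2 ∂μ ≤ 2 * A / δ := by
    intro n hn
    have hmono : ∫ x in S, δ * f n x ^ 2 ∂μ ≤ ∫ x in S, 2 * (f n x ^ 2 * p n x) ∂μ := by
      refine setIntegral_mono_on ((hfsq n).const_mul δ).integrableOn
        ((hfsqp n).const_mul 2).integrableOn hSmeas fun x hx => ?_
      have h1 : δ / 2 ≤ p n x := hN n hn x hx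
      nlinarith [sq_nonneg (f n x)]
    rw [integral_const_mul, integral_const_mul] at hmono
    have h2 : ∫ x in S, f n x ^ 2 * p n x ∂μ ≤ ∫ x, f n x ^ 2 * p n x ∂μ := by
      refine setIntegral_le_integral (hfsqp n) (ae_of_all _ fun x => ?_)
      exact mul_nonneg (sq_nonneg _) (hprange n x).1
    have h3 : ∫ x, f n x ^ 2 * p n x ∂μ ≤ A := hbound n
    rw [le_div_iff₀ hδpos]
    nlinarith [h2, h3]
  -- uniform bound on ∫_S f n ^ 2 for all n
  set C : ℝ := ∑ i ∈ Finset.range N, ∫ x, f i x ^ 2 ∂μ with hCdef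
  have hCnn : 0 ≤ C :=
    Finset.sum_nonneg fun i _ => integral_nonneg fun x => sq_nonneg _
  have hSbound : ∀ n, ∫ x in S, f n x ^ 2 ∂μ ≤ 2 * A / δ + C := by
    intro n
    by_cases hn : N ≤ n
    · linarith [hSbound1 n hn]
    · push_neg at hn
      have h1 : ∫ x in S, f n x ^ 2 ∂μ ≤ ∫ x, f n x ^ 2 ∂μ :=
        setIntegral_le_integral (hfsq n) (ae_of_all _ fun x => sq_nonneg _)
      have h2 : ∫ x, f n x ^ 2 ∂μ ≤ C :=
        Finset.single_le_sum (f := fun i => ∫ x, f i x ^ 2 ∂μ) (fun i _ => integral_nonneg fun x => sq_nonneg _)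
          (Finset.mem_range.2 hn)
      have h3 : 0 ≤ 2 * A / δ := by positivity
      linarith
  -- integrability of f n on S and |f| ≤ (1 + f^2)/2
  have habs : ∀ (n : ℕ) (x : EuclideanSpace ℝ (Fin 2)), |f n x| ≤ (1 + f n x ^ 2) / 2 := by
    intro n x
    nlinarith [sq_nonneg (|f n x| - 1), sq_abs (f n x)]
  have hdomint : ∀ n, IntegrableOn (fun x => (1 + f n x ^ 2) / 2) S μ := by
    intro n
    exact ((integrableOn_const hSfin.ne).add (hfsq n).integrableOn).div_const 2
  have hfind : ∀ n, IntegrableOn (f n) S μ := by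
    intro n
    refine Integrable.mono' (hdomint n) ((hf n).aestronglyMeasurable.restrict)
      (ae_of_all _ fun x => ?_)
    rw [Real.norm_eq_abs]
    exact habs n x
  -- the weight function
  refine ⟨S.indicator (fun _ => m⁻¹), ?_, ?_, ?_, ?_⟩
  · exact memLp_indicator_const 2 hSmeas _ (Or.inr hSfin.ne)
  · intro x
    exact Set.indicator_nonneg (fun _ _ => inv_nonneg.2 hmpos.le) x
  · rw [hμdef] at *
    rw [integral_indicator_const _ hSmeas, smul_eq_mul, measureReal_def, ← hmdef, mul_inv_cancel₀ hmpos.ne']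
  · refine ⟨((m + (2 * A / δ + C)) / 2) * m⁻¹ + 1, by positivity, fun n => ?_⟩
    have heq : (fun x => f n x * S.indicator (fun _ => m⁻¹) x)
        = S.indicator (fun y => f n y * m⁻¹) := by
      funext x
      by_cases hx : x ∈ S
      · simp [Set.indicator_of_mem hx]
      · simp [Set.indicator_of_notMem hx]
    have h1 : ∫ x in Ω, f n x * S.indicator (fun _ => m⁻¹) x
        = ∫ x in S, f n x * m⁻¹ ∂μ := by
      rw [hμdef] at *
      rw [show (∫ x in Ω, f n x * S.indicator (fun _ => m⁻¹) x)
          = ∫ x, (fun y => f n y * S.indicator (fun _ => m⁻¹) y) x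
            ∂(volume.restrict Ω) from rfl, heq, integral_indicator hSmeas]
    rw [h1, integral_mul_const]
    have h2 : |∫ x in S, f n x ∂μ| ≤ ∫ x in S, |f n x| ∂μ := by
      simpa [Real.norm_eq_abs] using
        norm_integral_le_integral_norm (μ := μ.restrict S) (f n)
    have h3 : ∫ x in S, |f n x| ∂μ ≤ ∫ x in S, (1 + f n x ^ 2) / 2 ∂μ := by
      refine setIntegral_mono_on (hfind n).abs (hdomint n) hSmeas fun x _ => habs n x
    have h4 : ∫ x in S, (1 + f n x ^ 2) / 2 ∂μ
        = ((μ S).toReal + ∫ x in S, f n x ^ 2 ∂μ) / 2 := by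
      rw [integral_div, integral_add (integrableOn_const (C := (1:ℝ)) hSfin.ne)
        (hfsq n).integrableOn]
      simp [setIntegral_const, measureReal_def]
    have h5 : ∫ x in S, (1 + f n x ^ 2) / 2 ∂μ ≤ (m + (2 * A / δ + C)) / 2 := by
      rw [h4, ← hmdef]
      linarith [hSbound n]
    have h6 : |∫ x in S, f n x ∂μ| ≤ (m + (2 * A / δ + C)) / 2 := by
      linarith
    rw [abs_mul, abs_inv, abs_of_pos hmpos]
    have h7 : |∫ x in S, f n x ∂μ| * m⁻¹ ≤ ((m + (2 * A / δ + C)) / 2) * m⁻¹ :=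
      mul_le_mul_of_nonneg_right h6 (inv_nonneg.2 hmpos.le)
    linarith
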